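/- Let μ > 0 and let f : ℝ → ℝ be measurable with ∫_ℝ e^{-μ cosh y} |f(sinh y)| dy < ∞. Then ∫_ℝ e^{-μ cosh y} f(sinh y) dy = ∫_0^∞ (1/v) exp(-1/(2v)) exp(-μ²v/2) E[f(β_v)] dv, where β_v is a centered Gaussian random variable of variance v, i.e. E[f(β_v)] = ∫_ℝ f(x) (2πv)^{-1/2} exp(-x²/(2v)) dx. -/

import Mathlib

open MeasureTheory Real Set

section Helpers

lemma le_exp_self (x : ℝ) : x ≤ Real.exp x := by
  linarith [Real.add_one_le_exp x]

lemma mul_exp_neg_le_one {x : ℝ} (hx : 0 ≤ x) : x * Real.exp (-x) ≤ 1 := by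
  calc x * Real.exp (-x) ≤ Real.exp x * Real.exp (-x) :=
        mul_le_mul_of_nonneg_right (le_exp_self x) (Real.exp_nonneg _)
    _ = 1 := by rw [← Real.exp_add]; simp

lemma exp_neg_le_inv {x : ℝ} (hx : 0 < x) : Real.exp (-x) ≤ x⁻¹ := by
  rw [Real.exp_neg]
  exact inv_anti₀ hx (le_exp_self x)

lemma sqrt_le_one_add {v : ℝ} (h : 0 ≤ v) : Real.sqrt v ≤ 1 + v := by
  rcases le_total v 1 with h1 | h1
  · calc Real.sqrt v ≤ Real.sqrt 1 := Real.sqrt_le_sqrt h1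
      _ = 1 := Real.sqrt_one
      _ ≤ 1 + v := by linarith
  · have : Real.sqrt v ≤ v := by nlinarith [Real.sq_sqrt h, Real.sqrt_nonneg v]
    linarith

lemma sqrt_mul_exp_bound {c v : ℝ} (hc : 0 < c) (hv : 0 ≤ v) :
    Real.sqrt v * Real.exp (-(c*v)) ≤ (1 + 2/c) * Real.exp (-(c*v/2)) := by
  have key : (1 + v) * Real.exp (-(c*v/2)) ≤ 1 + 2/c := by
    have e1 : Real.exp (-(c*v/2)) ≤ 1 := by
      rw [Real.exp_le_one_iff]; nlinarith
    have e2 : v * Real.exp (-(c*v/2)) ≤ 2/c := by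
      have h := mul_exp_neg_le_one (x := c*v/2) (by positivity)
      have hc' : c ≠ 0 := hc.ne'
      calc v * Real.exp (-(c*v/2)) = (2/c) * ((c*v/2) * Real.exp (-(c*v/2))) := by
            field_simp
        _ ≤ (2/c) * 1 := mul_le_mul_of_nonneg_left h (by positivity)
        _ = 2/c := mul_one _
    nlinarith [Real.exp_nonneg (-(c*v/2))]
  have epos : (0:ℝ) < Real.exp (-(c*v/2)) := Real.exp_pos _
  calc Real.sqrt v * Real.exp (-(c*v)) = Real.sqrt v * (Real.exp (-(c*v/2)) * Real.exp (-(c*v/2))) := by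
        rw [← Real.exp_add]; ring_nf
    _ ≤ (1+v) * Real.exp (-(c*v/2)) * Real.exp (-(c*v/2)) := by
        have := mul_le_mul_of_nonneg_right (sqrt_le_one_add hv) epos.le
        nlinarith [Real.sqrt_nonneg v, Real.exp_nonneg (-(c*v/2))]
    _ ≤ (1 + 2/c) * Real.exp (-(c*v/2)) := mul_le_mul_of_nonneg_right key epos.le

lemma kernel1_bound {a b v : ℝ} (ha : 0 < a) (hb : 0 < b) (hv : 0 < v) :
    (v * Real.sqrt v)⁻¹ * Real.exp (-(a^2/(2*v)) - b^2*v/2)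
      ≤ 16/a^4 * (1 + 4/b^2) * Real.exp (-(b^2/4*v)) := by
  have hsv : 0 < Real.sqrt v := Real.sqrt_pos.2 hv
  have hvv : Real.sqrt v * Real.sqrt v = v := Real.mul_self_sqrt hv.le
  have h1 : Real.exp (-(a^2/(2*v))) ≤ 16*v^2/a^4 := by
    have hx : 0 < a^2/(4*v) := by positivity
    have h := exp_neg_le_inv hx
    have : Real.exp (-(a^2/(2*v))) = Real.exp (-(a^2/(4*v))) * Real.exp (-(a^2/(4*v))) := by
      rw [← Real.exp_add]; ring_nf
    rw [this]
    have hinv : (a^2/(4*v))⁻¹ = 4*v/a^2 := by field_simp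
    rw [hinv] at h
    have h0 : (0:ℝ) ≤ Real.exp (-(a^2/(4*v))) := Real.exp_nonneg _
    calc Real.exp (-(a^2/(4*v))) * Real.exp (-(a^2/(4*v))) ≤ (4*v/a^2) * (4*v/a^2) := by
          nlinarith
      _ = 16*v^2/a^4 := by field_simp; ring
  have step1 : (v * Real.sqrt v)⁻¹ * Real.exp (-(a^2/(2*v)) - b^2*v/2)
      ≤ 16/a^4 * (Real.sqrt v * Real.exp (-(b^2/2*v))) := by
    have hE : Real.exp (-(a^2/(2*v)) - b^2*v/2)
        = Real.exp (-(a^2/(2*v))) * Real.exp (-(b^2/2*v)) := by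
      rw [← Real.exp_add]; ring_nf
    rw [hE]
    have h2 : (v * Real.sqrt v)⁻¹ * (16*v^2/a^4) = 16/a^4 * Real.sqrt v := by
      set s := Real.sqrt v with hs
      rw [← hvv]
      field_simp
    calc (v * Real.sqrt v)⁻¹ * (Real.exp (-(a^2/(2*v))) * Real.exp (-(b^2/2*v)))
        ≤ (v * Real.sqrt v)⁻¹ * ((16*v^2/a^4) * Real.exp (-(b^2/2*v))) := by
          apply mul_le_mul_of_nonneg_left _ (by positivity)
          exact mul_le_mul_of_nonneg_right h1 (Real.exp_nonneg _)
      _ = 16/a^4 * (Real.sqrt v * Real.exp (-(b^2/2*v))) := by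
          rw [← mul_assoc, h2]; ring
  have step2 : Real.sqrt v * Real.exp (-(b^2/2*v)) ≤ (1 + 4/b^2) * Real.exp (-(b^2/4*v)) := by
    have h := sqrt_mul_exp_bound (c := b^2/2) (v := v) (by positivity) hv.le
    have e2 : (1 + 2/(b^2/2)) = 1 + 4/b^2 := by field_simp; norm_num
    have e3 : (b^2/2*v/2) = b^2/4*v := by ring
    rw [e2, e3] at h
    exact h
  calc (v * Real.sqrt v)⁻¹ * Real.exp (-(a^2/(2*v)) - b^2*v/2)
      ≤ 16/a^4 * (Real.sqrt v * Real.exp (-(b^2/2*v))) := step1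
    _ ≤ 16/a^4 * ((1 + 4/b^2) * Real.exp (-(b^2/4*v))) :=
        mul_le_mul_of_nonneg_left step2 (by positivity)
    _ = 16/a^4 * (1 + 4/b^2) * Real.exp (-(b^2/4*v)) := by ring

lemma kernel2_bound {a b v : ℝ} (ha : 0 < a) (hb : 0 < b) (hv : 0 < v) :
    (Real.sqrt v)⁻¹ * Real.exp (-(a^2/(2*v)) - b^2*v/2)
      ≤ 2/a^2 * (1 + 4/b^2) * Real.exp (-(b^2/4*v)) := by
  have hsv : 0 < Real.sqrt v := Real.sqrt_pos.2 hv
  have hvv : Real.sqrt v * Real.sqrt v = v := Real.mul_self_sqrt hv.le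
  have h1 : Real.exp (-(a^2/(2*v))) ≤ 2*v/a^2 := by
    have hx : 0 < a^2/(2*v) := by positivity
    have h := exp_neg_le_inv hx
    have hinv : (a^2/(2*v))⁻¹ = 2*v/a^2 := by field_simp
    rwa [hinv] at h
  have step1 : (Real.sqrt v)⁻¹ * Real.exp (-(a^2/(2*v)) - b^2*v/2)
      ≤ 2/a^2 * (Real.sqrt v * Real.exp (-(b^2/2*v))) := by
    have hE : Real.exp (-(a^2/(2*v)) - b^2*v/2)
        = Real.exp (-(a^2/(2*v))) * Real.exp (-(b^2/2*v)) := by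
      rw [← Real.exp_add]; ring_nf
    rw [hE]
    have h2 : (Real.sqrt v)⁻¹ * (2*v/a^2) = 2/a^2 * Real.sqrt v := by
      set s := Real.sqrt v with hs
      rw [← hvv]
      field_simp
    calc (Real.sqrt v)⁻¹ * (Real.exp (-(a^2/(2*v))) * Real.exp (-(b^2/2*v)))
        ≤ (Real.sqrt v)⁻¹ * ((2*v/a^2) * Real.exp (-(b^2/2*v))) := by
          apply mul_le_mul_of_nonneg_left _ (by positivity)
          exact mul_le_mul_of_nonneg_right h1 (Real.exp_nonneg _)
      _ = 2/a^2 * (Real.sqrt v * Real.exp (-(b^2/2*v))) := by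
          rw [← mul_assoc, h2]; ring
  have step2 : Real.sqrt v * Real.exp (-(b^2/2*v)) ≤ (1 + 4/b^2) * Real.exp (-(b^2/4*v)) := by
    have h := sqrt_mul_exp_bound (c := b^2/2) (v := v) (by positivity) hv.le
    have e2 : (1 + 2/(b^2/2)) = 1 + 4/b^2 := by field_simp; norm_num
    have e3 : (b^2/2*v/2) = b^2/4*v := by ring
    rw [e2, e3] at h
    exact h
  calc (Real.sqrt v)⁻¹ * Real.exp (-(a^2/(2*v)) - b^2*v/2)
      ≤ 2/a^2 * (Real.sqrt v * Real.exp (-(b^2/2*v))) := step1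
    _ ≤ 2/a^2 * ((1 + 4/b^2) * Real.exp (-(b^2/4*v))) :=
        mul_le_mul_of_nonneg_left step2 (by positivity)
    _ = 2/a^2 * (1 + 4/b^2) * Real.exp (-(b^2/4*v)) := by ring

lemma kernel1_integrable {a b : ℝ} (ha : 0 < a) (hb : 0 < b) :
    IntegrableOn (fun v => (v * Real.sqrt v)⁻¹ * Real.exp (-(a^2/(2*v)) - b^2*v/2)) (Ioi 0) := by
  have hmaj : IntegrableOn (fun v => 16/a^4 * (1 + 4/b^2) * Real.exp (-(b^2/4*v))) (Ioi 0) := by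
    have := (exp_neg_integrableOn_Ioi 0 (show (0:ℝ) < b^2/4 by positivity)).const_mul
        (16/a^4 * (1 + 4/b^2))
    simpa [mul_comm, IntegrableOn] using this
  apply Integrable.mono' hmaj
  · apply Measurable.aestronglyMeasurable
    fun_prop
  · filter_upwards [ae_restrict_mem measurableSet_Ioi] with v hv
    have hv' : (0:ℝ) < v := hv
    have hsv : 0 < Real.sqrt v := Real.sqrt_pos.2 hv'
    rw [Real.norm_eq_abs, abs_of_nonneg (by positivity)]
    exact kernel1_bound ha hb hv'

lemma kernel2_integrable {a b : ℝ} (ha : 0 < a) (hb : 0 < b) :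
    IntegrableOn (fun v => (Real.sqrt v)⁻¹ * Real.exp (-(a^2/(2*v)) - b^2*v/2)) (Ioi 0) := by
  have hmaj : IntegrableOn (fun v => 2/a^2 * (1 + 4/b^2) * Real.exp (-(b^2/4*v))) (Ioi 0) := by
    have := (exp_neg_integrableOn_Ioi 0 (show (0:ℝ) < b^2/4 by positivity)).const_mul
        (2/a^2 * (1 + 4/b^2))
    simpa [mul_comm, IntegrableOn] using this
  apply Integrable.mono' hmaj
  · apply Measurable.aestronglyMeasurable
    fun_prop
  · filter_upwards [ae_restrict_mem measurableSet_Ioi] with v hv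
    have hv' : (0:ℝ) < v := hv
    have hsv : 0 < Real.sqrt v := Real.sqrt_pos.2 hv'
    rw [Real.norm_eq_abs, abs_of_nonneg (by positivity)]
    exact kernel2_bound ha hb hv'

lemma claimA {a b : ℝ} (ha : 0 < a) (hb : 0 < b) :
    ∫ v in Ioi (0:ℝ), (Real.sqrt v)⁻¹ * Real.exp (-(a^2/(2*v)) - b^2*v/2)
      = (a/b) * ∫ v in Ioi (0:ℝ), (v * Real.sqrt v)⁻¹ * Real.exp (-(a^2/(2*v)) - b^2*v/2) := by
  set ψ : ℝ → ℝ := fun v => (a/b)^2 * v⁻¹ with hψ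
  have himg : ψ '' Ioi 0 = Ioi 0 := by
    apply Subset.antisymm
    · rintro w ⟨v, hv, rfl⟩
      have hv' : (0:ℝ) < v := hv
      show (0:ℝ) < (a/b)^2 * v⁻¹
      positivity
    · intro w hw
      have hw' : (0:ℝ) < w := hw
      refine ⟨(a/b)^2 * w⁻¹, mem_Ioi.2 (by positivity), ?_⟩
      show (a/b)^2 * ((a/b)^2 * w⁻¹)⁻¹ = w
      field_simp
  have hderiv : ∀ v ∈ Ioi (0:ℝ), HasDerivWithinAt ψ ((a/b)^2 * -(v^2)⁻¹) (Ioi 0) v := by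
    intro v hv
    have hv' : (0:ℝ) < v := hv
    exact ((hasDerivAt_inv hv'.ne').const_mul ((a/b)^2)).hasDerivWithinAt
  have hinj : InjOn ψ (Ioi 0) := by
    intro x hx y hy h
    have hc : ((a/b)^2 : ℝ) ≠ 0 := by positivity
    simp only [hψ] at h
    have := mul_left_cancel₀ hc h
    exact inv_injective this
  have key := integral_image_eq_integral_abs_deriv_smul measurableSet_Ioi hderiv hinj
      (fun v => (Real.sqrt v)⁻¹ * Real.exp (-(a^2/(2*v)) - b^2*v/2))
  rw [himg] at key
  rw [key]
  rw [← integral_const_mul]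
  apply setIntegral_congr_fun measurableSet_Ioi
  intro v hv
  have hv' : (0:ℝ) < v := hv
  have hsv : 0 < Real.sqrt v := Real.sqrt_pos.2 hv'
  have hvv : Real.sqrt v * Real.sqrt v = v := Real.mul_self_sqrt hv'.le
  have hsψ : Real.sqrt (ψ v) = (a/b) * (Real.sqrt v)⁻¹ := by
    simp only [hψ]
    rw [Real.sqrt_mul (by positivity), Real.sqrt_inv, Real.sqrt_sq (by positivity)]
  have hEψ : Real.exp (-(a^2/(2*(ψ v))) - b^2*(ψ v)/2)
      = Real.exp (-(a^2/(2*v)) - b^2*v/2) := by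
    congr 1
    simp only [hψ]
    field_simp
    ring
  simp only [smul_eq_mul, hsψ, hEψ]
  rw [mul_neg, abs_neg, abs_of_nonneg (by positivity)]
  set s := Real.sqrt v with hs
  rw [← hvv]
  field_simp

lemma claimB {a b : ℝ} (ha : 0 < a) (hb : 0 < b) :
    ∫ u : ℝ, Real.exp (-u^2/2 - a*b)
      = ∫ v in Ioi (0:ℝ),
          (a/2 * ((v * Real.sqrt v)⁻¹ * Real.exp (-(a^2/(2*v)) - b^2*v/2))
            + b/2 * ((Real.sqrt v)⁻¹ * Real.exp (-(a^2/(2*v)) - b^2*v/2))) := by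
  set φ : ℝ → ℝ := fun v => b * Real.sqrt v - a * (Real.sqrt v)⁻¹ with hφ
  set φ' : ℝ → ℝ := fun v => b * (1/(2*Real.sqrt v)) - a * (-(1/(2*Real.sqrt v)) / (Real.sqrt v)^2) with hφ'
  have hderiv : ∀ v ∈ Ioi (0:ℝ), HasDerivWithinAt φ (φ' v) (Ioi 0) v := by
    intro v hv
    have hv' : (0:ℝ) < v := hv
    have hsv : 0 < Real.sqrt v := Real.sqrt_pos.2 hv'
    have h1 : HasDerivAt (fun v => b * Real.sqrt v) (b * (1/(2*Real.sqrt v))) v :=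
      (Real.hasDerivAt_sqrt hv'.ne').const_mul b
    have h2 : HasDerivAt (fun v => a * (Real.sqrt v)⁻¹)
        (a * (-(1/(2*Real.sqrt v)) / (Real.sqrt v)^2)) v :=
      ((Real.hasDerivAt_sqrt hv'.ne').inv hsv.ne').const_mul a
    exact (h1.sub h2).hasDerivWithinAt
  have hinj : InjOn φ (Ioi 0) := by
    apply StrictMonoOn.injOn
    intro x hx y hy hxy
    have hx' : (0:ℝ) < x := hx
    have hsx : 0 < Real.sqrt x := Real.sqrt_pos.2 hx'
    have h1 : Real.sqrt x < Real.sqrt y := Real.sqrt_lt_sqrt hx'.le hxy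
    have h2 : (Real.sqrt y)⁻¹ < (Real.sqrt x)⁻¹ := by
      simpa [one_div] using one_div_lt_one_div_of_lt hsx h1
    simp only [hφ]
    have := mul_lt_mul_of_pos_left h1 hb
    have h3 : a * (Real.sqrt y)⁻¹ < a * (Real.sqrt x)⁻¹ := mul_lt_mul_of_pos_left h2 ha
    linarith
  have himg : φ '' Ioi 0 = univ := by
    apply eq_univ_of_forall
    intro u
    set s := Real.sqrt (u^2 + 4*a*b) with hs
    have hs2 : s^2 = u^2 + 4*a*b := Real.sq_sqrt (by positivity)
    have hsu : |u| < s := by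
      rw [hs, ← Real.sqrt_sq_eq_abs]
      exact Real.sqrt_lt_sqrt (sq_nonneg u) (by nlinarith)
    have hupos : 0 < u + s := by
      have := neg_abs_le u
      linarith
    set t := (u + s)/(2*b) with ht
    have htpos : 0 < t := by positivity
    refine ⟨t^2, mem_Ioi.2 (by positivity), ?_⟩
    simp only [hφ]
    rw [Real.sqrt_sq htpos.le]
    have h2bt : 2*b*t = u + s := by rw [ht]; field_simp
    have h4 : (2*b*t)^2 = (u+s)^2 := by rw [h2bt]
    have h5 : u*(2*b*t) = u*(u+s) := by rw [h2bt]
    clear_value t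
    clear_value s
    have key : 4*b*((b*t-u)*t - a) = 0 := by linear_combination h4 - 2*h5 + hs2
    have key2 : (b*t-u)*t - a = 0 := by
      apply mul_left_cancel₀ (show (4*b:ℝ) ≠ 0 by positivity)
      simpa using key
    field_simp [htpos.ne']
    linear_combination key2
  have key := integral_image_eq_integral_abs_deriv_smul measurableSet_Ioi hderiv hinj
      (fun u => Real.exp (-u^2/2 - a*b))
  rw [himg] at key
  rw [← setIntegral_univ]
  rw [key]
  apply setIntegral_congr_fun measurableSet_Ioi
  intro v hv
  have hv' : (0:ℝ) < v := hv
  have hsv : 0 < Real.sqrt v := Real.sqrt_pos.2 hv'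
  have hvv : Real.sqrt v * Real.sqrt v = v := Real.mul_self_sqrt hv'.le
  have hφ'eq : φ' v = b/(2*Real.sqrt v) + a/(2*(v*Real.sqrt v)) := by
    simp only [hφ']
    rw [← hvv]
    field_simp
    rw [Real.sqrt_sq hsv.le]
    ring
  have hφpos : 0 < φ' v := by
    rw [hφ'eq]
    positivity
  have hEφ : Real.exp (-(φ v)^2/2 - a*b) = Real.exp (-(a^2/(2*v)) - b^2*v/2) := by
    congr 1
    have hsq : (φ v)^2 = b^2*v - 2*a*b + a^2/v := by
      simp only [hφ]
      set sv := Real.sqrt v with hsvdef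
      rw [← hvv]
      field_simp
      ring
    rw [hsq]
    field_simp
    ring
  simp only [smul_eq_mul]
  rw [abs_of_pos hφpos, hEφ, hφ'eq]
  set sv := Real.sqrt v with hsvdef
  rw [← hvv]
  field_simp
  ring

lemma kernel_value {a b : ℝ} (ha : 0 < a) (hb : 0 < b) :
    ∫ v in Ioi (0:ℝ), (v * Real.sqrt v)⁻¹ * Real.exp (-(a^2/(2*v)) - b^2*v/2)
      = Real.sqrt (2*π) / a * Real.exp (-(a*b)) := by
  set I := ∫ v in Ioi (0:ℝ), (v * Real.sqrt v)⁻¹ * Real.exp (-(a^2/(2*v)) - b^2*v/2) with hI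
  have hL : ∫ u : ℝ, Real.exp (-u^2/2 - a*b) = Real.exp (-(a*b)) * Real.sqrt (2*π) := by
    have hpt : ∀ u : ℝ, Real.exp (-u^2/2 - a*b)
        = Real.exp (-(a*b)) * Real.exp (-(1/2 : ℝ) * u^2) := by
      intro u
      rw [← Real.exp_add]
      congr 1
      ring
    simp_rw [hpt]
    rw [integral_const_mul, integral_gaussian]
    congr 1
    rw [show π / (1/2 : ℝ) = 2*π by ring]
  have hR : ∫ v in Ioi (0:ℝ),
        (a/2 * ((v * Real.sqrt v)⁻¹ * Real.exp (-(a^2/(2*v)) - b^2*v/2))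
          + b/2 * ((Real.sqrt v)⁻¹ * Real.exp (-(a^2/(2*v)) - b^2*v/2)))
      = a * I := by
    rw [integral_add (((kernel1_integrable ha hb)).const_mul (a/2))
        (((kernel2_integrable ha hb)).const_mul (b/2)), integral_const_mul, integral_const_mul,
        claimA ha hb]
    rw [← hI]
    field_simp
    ring
  have := (claimB ha hb).symm.trans hL
  rw [hR] at this
  rw [show I = a⁻¹ * (a * I) by field_simp, this]
  field_simp

end Helpers

theorem stmt_0 (μ : ℝ) (hμ : 0 < μ) (f : ℝ → ℝ) (hf : Measurable f)
    (hint : Integrable (fun y : ℝ => Real.exp (-μ * Real.cosh y) * |f (Real.sinh y)|)) :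
    ∫ y : ℝ, Real.exp (-μ * Real.cosh y) * f (Real.sinh y)
      = ∫ v in Ioi (0:ℝ),
          (1 / v) * Real.exp (-1 / (2 * v)) * Real.exp (-μ ^ 2 * v / 2) *
            (∫ x : ℝ, f x * ((2 * π * v) ^ (-(1:ℝ) / 2) * Real.exp (-x ^ 2 / (2 * v)))) := by
  set G : ℝ → ℝ := fun x => Real.exp (-μ * Real.sqrt (1+x^2)) / Real.sqrt (1+x^2) with hG
  set K : ℝ → ℝ → ℝ := fun x v => (v * Real.sqrt v)⁻¹ *
      Real.exp (-((1+x^2)/(2*v)) - μ^2*v/2) with hK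
  have hcoshsq : ∀ y : ℝ, Real.sqrt (1 + Real.sinh y^2) = Real.cosh y := by
    intro y
    rw [show (1:ℝ) + Real.sinh y^2 = Real.cosh y^2 by rw [Real.cosh_sq]; ring,
      Real.sqrt_sq (Real.cosh_pos y).le]
  have hsinh_deriv : ∀ y ∈ (univ : Set ℝ), HasDerivWithinAt Real.sinh (Real.cosh y) univ y :=
    fun y _ => (Real.hasDerivAt_sinh y).hasDerivWithinAt
  have hsinh_img : Real.sinh '' univ = univ := by
    rw [image_univ]; exact Real.sinh_surjective.range_eq
  have hax : ∀ x : ℝ, 0 < Real.sqrt (1+x^2) := fun x => Real.sqrt_pos.2 (by positivity)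
  have hax2 : ∀ x : ℝ, (Real.sqrt (1+x^2))^2 = 1+x^2 := fun x => Real.sq_sqrt (by positivity)
  -- kernel integrability and value, for each x
  have hKint : ∀ x : ℝ, IntegrableOn (fun v => K x v) (Ioi 0) := by
    intro x
    have h := kernel1_integrable (hax x) hμ
    rw [show (Real.sqrt (1+x^2))^2 = 1+x^2 from hax2 x] at h
    exact h
  have hKval : ∀ x : ℝ, ∫ v in Ioi (0:ℝ), K x v = Real.sqrt (2*π) * G x := by
    intro x
    have h := kernel_value (hax x) hμ
    rw [show (Real.sqrt (1+x^2))^2 = 1+x^2 from hax2 x] at h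
    simp only [hK, hG]
    rw [h, show -(Real.sqrt (1+x^2)*μ) = -μ*Real.sqrt (1+x^2) by ring,
      div_mul_eq_mul_div, mul_div_assoc]
  -- transfer of the hypothesis by the change of variables x = sinh y
  have habs_point : ∀ y : ℝ, |Real.cosh y| • (|f (Real.sinh y)| * G (Real.sinh y))
      = Real.exp (-μ * Real.cosh y) * |f (Real.sinh y)| := by
    intro y
    have hc := Real.cosh_pos y
    have hGy : G (Real.sinh y) = Real.exp (-μ * Real.cosh y) / Real.cosh y := by
      simp only [hG, hcoshsq y]
    rw [smul_eq_mul, abs_of_pos hc, hGy]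
    field_simp
  have hGabs : Integrable (fun x => |f x| * G x) := by
    have key := integrableOn_image_iff_integrableOn_abs_deriv_smul MeasurableSet.univ
        hsinh_deriv Real.sinh_injective.injOn (fun x => |f x| * G x)
    rw [hsinh_img] at key
    rw [← integrableOn_univ]
    apply key.mpr
    rw [integrableOn_univ]
    apply hint.congr
    apply ae_of_all
    intro y
    exact (habs_point y).symm
  -- the LHS after the change of variables x = sinh y
  have hLHSeq : ∫ x : ℝ, f x * G x
      = ∫ y : ℝ, Real.exp (-μ * Real.cosh y) * f (Real.sinh y) := by
    have key := integral_image_eq_integral_abs_deriv_smul MeasurableSet.univ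
        hsinh_deriv Real.sinh_injective.injOn (fun x => f x * G x)
    rw [hsinh_img, setIntegral_univ, setIntegral_univ] at key
    rw [key]
    congr 1
    funext y
    have hc := Real.cosh_pos y
    have hGy : G (Real.sinh y) = Real.exp (-μ * Real.cosh y) / Real.cosh y := by
      simp only [hG, hcoshsq y]
    rw [smul_eq_mul, hGy, abs_of_pos hc]
    field_simp
  -- Fubini
  have hWmeas : AEStronglyMeasurable (Function.uncurry fun x v => f x * K x v)
      (volume.prod (volume.restrict (Ioi 0))) := by
    apply Measurable.aestronglyMeasurable
    simp only [Function.uncurry, hK]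
    fun_prop
  have hW : Integrable (Function.uncurry fun x v => f x * K x v)
      (volume.prod (volume.restrict (Ioi 0))) := by
    rw [integrable_prod_iff hWmeas]
    constructor
    · apply ae_of_all
      intro x
      simpa using (hKint x).const_mul (f x)
    · have heq : (fun x => ∫ v in Ioi (0:ℝ), ‖(Function.uncurry fun x v => f x * K x v) (x, v)‖)
          = fun x => Real.sqrt (2*π) * (|f x| * G x) := by
        funext x
        have hpt : ∀ v ∈ Ioi (0:ℝ),
            ‖(Function.uncurry fun x v => f x * K x v) (x, v)‖ = |f x| * K x v := by
          intro v hv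
          have hv' : (0:ℝ) < v := hv
          have hsv : 0 ≤ Real.sqrt v := Real.sqrt_nonneg v
          have hKnn : 0 ≤ K x v := by
            simp only [hK]
            positivity
          simp only [Function.uncurry, Real.norm_eq_abs, abs_mul, abs_of_nonneg hKnn]
        rw [setIntegral_congr_fun measurableSet_Ioi hpt, integral_const_mul, hKval x]
        ring
      rw [heq]
      exact hGabs.const_mul _
  have hswap := integral_integral_swap (f := fun x v => f x * K x v) hW
  -- compute the inner v-integral of the left iterated integral
  have hinner : ∀ x : ℝ, ∫ v in Ioi (0:ℝ), f x * K x v = Real.sqrt (2*π) * (f x * G x) := by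
    intro x
    rw [integral_const_mul, hKval x]
    ring
  have hsqrt2pi : (0:ℝ) < Real.sqrt (2*π) := Real.sqrt_pos.2 (by positivity)
  -- identify RHS with the swapped integral
  have hRHS : ∫ v in Ioi (0:ℝ),
        (1 / v) * Real.exp (-1 / (2 * v)) * Real.exp (-μ ^ 2 * v / 2) *
          (∫ x : ℝ, f x * ((2 * π * v) ^ (-(1:ℝ) / 2) * Real.exp (-x ^ 2 / (2 * v))))
      = (Real.sqrt (2*π))⁻¹ * ∫ v in Ioi (0:ℝ), ∫ x : ℝ, f x * K x v := by
    rw [← integral_const_mul]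
    apply setIntegral_congr_fun measurableSet_Ioi
    intro v hv
    have hv' : (0:ℝ) < v := hv
    have hsv : 0 < Real.sqrt v := Real.sqrt_pos.2 hv'
    have hvv : Real.sqrt v * Real.sqrt v = v := Real.mul_self_sqrt hv'.le
    have hrpow : (2*π*v) ^ (-(1:ℝ)/2) = (Real.sqrt (2*π) * Real.sqrt v)⁻¹ := by
      rw [show (-(1:ℝ)/2) = -((1:ℝ)/2) by norm_num, Real.rpow_neg (by positivity),
        ← Real.sqrt_eq_rpow, Real.sqrt_mul (by positivity)]
    have hsplit : ∀ x : ℝ, f x * K x v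
        = ((v*Real.sqrt v)⁻¹ * Real.exp (-1/(2*v)) * Real.exp (-μ^2*v/2))
            * (f x * Real.exp (-x^2/(2*v))) := by
      intro x
      simp only [hK]
      rw [show Real.exp (-((1+x^2)/(2*v)) - μ^2*v/2)
          = Real.exp (-1/(2*v)) * Real.exp (-μ^2*v/2) * Real.exp (-x^2/(2*v)) by
        rw [← Real.exp_add, ← Real.exp_add]; congr 1; ring]
      ring
    have hsplit2 : ∀ x : ℝ, f x * ((2*π*v) ^ (-(1:ℝ)/2) * Real.exp (-x^2/(2*v)))
        = (Real.sqrt (2*π) * Real.sqrt v)⁻¹ * (f x * Real.exp (-x^2/(2*v))) := by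
      intro x
      rw [hrpow]
      ring
    simp_rw [hsplit, hsplit2, integral_const_mul]
    set s := Real.sqrt v with hs
    set J := ∫ x : ℝ, f x * Real.exp (-x^2/(2*v)) with hJ
    have hsc : (Real.sqrt (2*π))⁻¹ * (v*s)⁻¹ = 1/v * (Real.sqrt (2*π)*s)⁻¹ := by
      field_simp
    linear_combination (Real.exp (-1/(2*v)) * Real.exp (-μ^2*v/2) * J) * hsc
  rw [hRHS, ← hswap]
  simp_rw [hinner]
  rw [integral_const_mul, ← hLHSeq, ← mul_assoc, inv_mul_cancel₀ hsqrt2pi.ne', one_mul]
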